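/- arXiv:2602.23144 — 2 statements merged into one kernel-verified Lean document; each statement's English description precedes it below -/
import Mathlib

section
/- Let H be a finite-dimensional complex Hilbert space of dimension d, let π be a positive semidefinite Hermitian operator on H with eigendecomposition π = Σ_i π_i |γ_i⟩⟨γ_i|, and let W be a Hermitian operator with eigendecomposition W = Σ_j W_j |ξ_j⟩⟨ξ_j|. Let φ: [0,∞) → ℝ be convex and superlinear and ψ = φ* its Legendre transform. Then Tr[Wπ] ≤ Tr[φ(π)] + Tr[ψ(W)], where φ(π) and ψ(W) are defined by functional calculus. -/
open scoped ComplexOrder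

open Matrix Filter Topology

/-- Trace of `g` applied to a Hermitian matrix via functional calculus
(junk value `0` on non-Hermitian matrices). -/
noncomputable def traceFun {n : Type*} [Fintype n] [DecidableEq n]
    (g : ℝ → ℝ) (A : Matrix n n ℂ) : ℝ :=
  if h : A.IsHermitian then ∑ i, g (h.eigenvalues i) else 0

/-- The Legendre transform of `φ : [0,∞) → ℝ`, i.e. `ψ t = sup_{x ≥ 0} (t x - φ x)`. -/
noncomputable def legendre (φ : ℝ → ℝ) (t : ℝ) : ℝ :=
  sSup ((fun x => t * x - φ x) '' Set.Ici 0)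

lemma legendre_bddAbove (φ : ℝ → ℝ) (hconv : ConvexOn ℝ (Set.Ici 0) φ)
    (hsl : Tendsto (fun t => φ t / t) atTop atTop) (t : ℝ) :
    BddAbove ((fun x => t * x - φ x) '' Set.Ici 0) := by
  obtain ⟨M₀, hM₀⟩ := (hsl.eventually_ge_atTop (|t| + 1)).exists_forall_of_atTop
  set M := max M₀ 1 with hMdef
  have hM1 : (1:ℝ) ≤ M := le_max_right _ _
  have hM0 : (0:ℝ) < M := lt_of_lt_of_le one_pos hM1
  refine ⟨max 0 (|t| * M + max (φ M) (φ (2*M)) - 2 * φ M), ?_⟩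
  rintro _ ⟨x, hx, rfl⟩
  simp only [Set.mem_Ici] at hx
  rcases le_or_gt x M with hxM | hxM
  · -- x ∈ [0, M]
    refine le_trans ?_ (le_max_right _ _)
    have hy : 2*M - x ∈ Set.Icc M (2*M) := by constructor <;> linarith
    have h1 : φ M ≤ (1/2) * φ x + (1/2) * φ (2*M - x) := by
      have := hconv.2 (Set.mem_Ici.mpr hx) (show 2*M - x ∈ Set.Ici (0:ℝ) by
        simp only [Set.mem_Ici]; linarith) (by norm_num : (0:ℝ) ≤ 1/2)
        (by norm_num : (0:ℝ) ≤ 1/2) (by norm_num)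
      have heq : (1/2 : ℝ) • x + (1/2 : ℝ) • (2*M - x) = M := by
        simp [smul_eq_mul]; ring
      rw [heq] at this
      simpa [smul_eq_mul] using this
    have h2 : φ (2*M - x) ≤ max (φ M) (φ (2*M)) := by
      apply hconv.le_on_segment (Set.mem_Ici.mpr (le_of_lt hM0))
        (Set.mem_Ici.mpr (by linarith))
      rw [segment_eq_Icc (by linarith : M ≤ 2*M)]
      exact hy
    show t * x - φ x ≤ |t| * M + max (φ M) (φ (2*M)) - 2 * φ M
    have htx : t * x ≤ |t| * M := by
      calc t * x ≤ |t| * x := mul_le_mul_of_nonneg_right (le_abs_self t) hx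
        _ ≤ |t| * M := mul_le_mul_of_nonneg_left hxM (abs_nonneg t)
    linarith
  · -- x > M
    refine le_trans ?_ (le_max_left _ _)
    have hφx : (|t| + 1) ≤ φ x / x := hM₀ x (le_trans (le_max_left _ _) hxM.le)
    have hx0 : 0 < x := lt_of_lt_of_le hM0 hxM.le
    have h3 : (|t| + 1) * x ≤ φ x := (le_div_iff₀ hx0).mp hφx
    show t * x - φ x ≤ 0
    nlinarith [le_abs_self t, abs_nonneg t]

lemma fenchel_young (φ : ℝ → ℝ) (hconv : ConvexOn ℝ (Set.Ici 0) φ)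
    (hsl : Tendsto (fun t => φ t / t) atTop atTop) {x : ℝ} (hx : 0 ≤ x) (t : ℝ) :
    t * x ≤ φ x + legendre φ t := by
  have h := le_csSup (legendre_bddAbove φ hconv hsl t)
    (Set.mem_image_of_mem _ (Set.mem_Ici.mpr hx))
  unfold legendre
  linarith [h]

/-- Trace Fenchel–Young inequality: `Tr[Wπ] ≤ Tr[φ(π)] + Tr[ψ(W)]` for `π` positive
semidefinite, `W` Hermitian, `φ` convex superlinear on `[0,∞)` and `ψ = φ*`. -/
theorem stmt2 {d : ℕ} (φ : ℝ → ℝ) (hconv : ConvexOn ℝ (Set.Ici 0) φ)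
    (hsl : Tendsto (fun t => φ t / t) atTop atTop)
    (π W : Matrix (Fin d) (Fin d) ℂ) (hπ : π.PosSemidef) (hW : W.IsHermitian) :
    (Matrix.trace (W * π)).re ≤ traceFun φ π + traceFun (legendre φ) W := by
  have hπ1 : π.IsHermitian := hπ.1
  set V := (hW.eigenvectorUnitary : Matrix (Fin d) (Fin d) ℂ) with hVdef
  set U := (hπ1.eigenvectorUnitary : Matrix (Fin d) (Fin d) ℂ) with hUdef
  set P : Matrix (Fin d) (Fin d) ℂ := star V * U with hPdef
  set q : Fin d → Fin d → ℝ := fun j i => Complex.normSq (P j i) with hqdef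
  have hPmem : P ∈ Matrix.unitaryGroup (Fin d) ℂ :=
    mul_mem (Unitary.star_mem (hW.eigenvectorUnitary).2) (hπ1.eigenvectorUnitary).2
  have hrow : ∀ j, ∑ i, q j i = 1 := by
    intro j
    have h1 : (P * star P) j j = 1 := by
      rw [(Matrix.mem_unitaryGroup_iff).mp hPmem]; simp
    rw [Matrix.mul_apply] at h1
    have : ((∑ i, q j i : ℝ) : ℂ) = 1 := by
      rw [← h1]; push_cast
      exact Finset.sum_congr rfl fun i _ => by
        rw [Matrix.star_apply, ← Complex.mul_conj]; rfl
    exact_mod_cast this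
  have hcol : ∀ i, ∑ j, q j i = 1 := by
    intro i
    have h1 : (star P * P) i i = 1 := by
      rw [(Matrix.mem_unitaryGroup_iff').mp hPmem]; simp
    rw [Matrix.mul_apply] at h1
    have : ((∑ j, q j i : ℝ) : ℂ) = 1 := by
      rw [← h1]; push_cast
      exact Finset.sum_congr rfl fun j _ => by
        rw [Matrix.star_apply, ← Complex.mul_conj, mul_comm]; rfl
    exact_mod_cast this
  -- trace computation
  set Dw := diagonal (RCLike.ofReal ∘ hW.eigenvalues : Fin d → ℂ) with hDw
  set Dp := diagonal (RCLike.ofReal ∘ hπ1.eigenvalues : Fin d → ℂ) with hDp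
  have htr : Matrix.trace (W * π) =
      ∑ j, ∑ i, (hW.eigenvalues j : ℂ) * P j i * (hπ1.eigenvalues i : ℂ)
        * (starRingEnd ℂ) (P j i) := by
    have step1 : Matrix.trace (W * π) = Matrix.trace (Dw * P * Dp * star P) := by
      conv_lhs => rw [hW.spectral_theorem, hπ1.spectral_theorem, Unitary.conjStarAlgAut_apply,
        Unitary.conjStarAlgAut_apply]
      rw [show V * Dw * star V * (U * Dp * star U) = V * (Dw * star V * U * Dp * star U) from by
        noncomm_ring]
      rw [Matrix.trace_mul_comm]
      rw [hPdef, StarMul.star_mul, star_star]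
      noncomm_ring
    rw [step1, Matrix.trace]
    congr 1
    ext j
    rw [Matrix.diag_apply, Matrix.mul_apply]
    congr 1
    ext i
    rw [Matrix.star_apply]
    congr 1
    rw [Matrix.mul_diagonal, Matrix.diagonal_mul]
    rfl
  have hre : (Matrix.trace (W * π)).re =
      ∑ j, ∑ i, hW.eigenvalues j * hπ1.eigenvalues i * q j i := by
    have : Matrix.trace (W * π) =
        ((∑ j, ∑ i, hW.eigenvalues j * hπ1.eigenvalues i * q j i : ℝ) : ℂ) := by
      rw [htr]
      push_cast
      refine Finset.sum_congr rfl fun j _ => Finset.sum_congr rfl fun i _ => ?_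
      rw [hqdef]
      push_cast
      rw [← Complex.mul_conj]
      ring
    rw [this, Complex.ofReal_re]
  rw [hre]
  have hq0 : ∀ j i, 0 ≤ q j i := fun j i => Complex.normSq_nonneg _
  calc ∑ j, ∑ i, hW.eigenvalues j * hπ1.eigenvalues i * q j i
      ≤ ∑ j, ∑ i, (φ (hπ1.eigenvalues i) + legendre φ (hW.eigenvalues j)) * q j i := by
        refine Finset.sum_le_sum fun j _ => Finset.sum_le_sum fun i _ => ?_
        exact mul_le_mul_of_nonneg_right
          (fenchel_young φ hconv hsl (hπ.eigenvalues_nonneg i) (hW.eigenvalues j)) (hq0 j i)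
    _ = (∑ j, ∑ i, φ (hπ1.eigenvalues i) * q j i)
        + ∑ j, ∑ i, legendre φ (hW.eigenvalues j) * q j i := by
        rw [← Finset.sum_add_distrib]
        refine Finset.sum_congr rfl fun j _ => ?_
        rw [← Finset.sum_add_distrib]
        refine Finset.sum_congr rfl fun i _ => ?_
        ring
    _ = traceFun φ π + traceFun (legendre φ) W := by
        rw [traceFun, traceFun, dif_pos hπ1, dif_pos hW]
        congr 1
        · rw [Finset.sum_comm]
          refine Finset.sum_congr rfl fun i _ => ?_
          rw [← Finset.mul_sum, hcol i, mul_one]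
        · refine Finset.sum_congr rfl fun j _ => ?_
          rw [← Finset.mul_sum, hrow j, mul_one]
end

section
/- Let ψ: ℝ → ℝ be strictly convex, and suppose that π is positive semidefinite Hermitian, W is Hermitian, and equality Tr[Wπ] = Tr[φ(π)] + Tr[ψ(W)] holds, where φ = ψ* restricted to [0,∞). Then π and W commute. -/
open scoped ComplexOrder

open Matrix Filter Topology

/-- Strict convexity implies injectivity of subdifferentials: if `x` is a subgradient
of `ψ` at both `a` and `b` (in the sense that both attain the sup in the Legendre
transform), then `a = b`. -/
lemma subgrad_inj {ψ : ℝ → ℝ} (hψ : StrictConvexOn ℝ Set.univ ψ) {x a b : ℝ}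
    (ha : ∀ t, x * t - ψ t ≤ x * a - ψ a) (hb : ∀ t, x * t - ψ t ≤ x * b - ψ b) :
    a = b := by
  by_contra hab
  have h2 := hψ.2 (Set.mem_univ a) (Set.mem_univ b) hab
    (by norm_num : (0:ℝ) < 1/2) (by norm_num : (0:ℝ) < 1/2) (by norm_num)
  simp only [smul_eq_mul] at h2
  have hm := ha (1/2 * a + 1/2 * b)
  have h3 := ha b
  have h4 := hb a
  have hx : x * (1/2 * a + 1/2 * b) = (x * a) / 2 + (x * b) / 2 := by ring
  rw [hx] at hm
  linarith

/-- Equality in the trace Fenchel–Young inequality with `ψ` strictly convex forces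
`π` and `W` to commute.  Here `φ = ψ*` restricted to `[0,∞)`, encoded by the `IsLUB`
hypothesis. -/
theorem stmt4 {d : ℕ} (ψ : ℝ → ℝ) (hψ : StrictConvexOn ℝ Set.univ ψ)
    (φ : ℝ → ℝ) (hφ : ∀ x ∈ Set.Ici (0 : ℝ), IsLUB {y : ℝ | ∃ t : ℝ, y = x * t - ψ t} (φ x))
    (π W : Matrix (Fin d) (Fin d) ℂ) (hπ : π.PosSemidef) (hW : W.IsHermitian)
    (heq : (Matrix.trace (W * π)).re = traceFun φ π + traceFun ψ W) :
    Commute π W := by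
  classical
  have hπh : π.IsHermitian := hπ.1
  set p : Fin d → ℝ := hπh.eigenvalues with hp
  set w : Fin d → ℝ := hW.eigenvalues with hwdef
  set U : Matrix (Fin d) (Fin d) ℂ := (hπh.eigenvectorUnitary : Matrix (Fin d) (Fin d) ℂ) with hUdef
  set V : Matrix (Fin d) (Fin d) ℂ := (hW.eigenvectorUnitary : Matrix (Fin d) (Fin d) ℂ) with hVdef
  have hUU : star U * U = 1 := Matrix.mem_unitaryGroup_iff'.mp hπh.eigenvectorUnitary.2
  have hUU' : U * star U = 1 := Matrix.mem_unitaryGroup_iff.mp hπh.eigenvectorUnitary.2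
  have hVV : star V * V = 1 := Matrix.mem_unitaryGroup_iff'.mp hW.eigenvectorUnitary.2
  have hVV' : V * star V = 1 := Matrix.mem_unitaryGroup_iff.mp hW.eigenvectorUnitary.2
  set Q : Matrix (Fin d) (Fin d) ℂ := star U * V with hQdef
  have hQQ : Q * star Q = 1 := by
    rw [hQdef, StarMul.star_mul, star_star]
    calc star U * V * (star V * U) = star U * (V * star V) * U := by noncomm_ring
      _ = 1 := by rw [hVV', mul_one, hUU]
  have hQQ' : star Q * Q = 1 := by
    rw [hQdef, StarMul.star_mul, star_star]
    calc star V * U * (star U * V) = star V * (U * star U) * V := by noncomm_ring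
      _ = 1 := by rw [hUU', mul_one, hVV]
  set Dp : Matrix (Fin d) (Fin d) ℂ := diagonal (RCLike.ofReal ∘ p) with hDp
  set Dw : Matrix (Fin d) (Fin d) ℂ := diagonal (RCLike.ofReal ∘ w) with hDw
  have hπd : π = U * Dp * star U := hπh.spectral_theorem
  have hWd : W = V * Dw * star V := hW.spectral_theorem
  have hcoe : (RCLike.ofReal : ℝ → ℂ) = Complex.ofReal := rfl
  set S : Fin d → Fin d → ℝ := fun i j => Complex.normSq (Q i j) with hSdef
  have hQS : ∀ i j, Q i j * star (Q i j) = (S i j : ℂ) := fun i j => Complex.mul_conj _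
  -- entries of Q * Dw * star Q
  have hB : ∀ i k, (Q * Dw * star Q) i k = ∑ j, Q i j * (w j : ℂ) * star (Q k j) := by
    intro i k
    rw [mul_apply]
    refine Finset.sum_congr rfl fun j _ => ?_
    rw [mul_diagonal, Matrix.star_apply]
    rfl
  -- trace computation
  have htr : Matrix.trace (W * π) = ∑ i, ∑ j, (S i j : ℂ) * ((p i : ℂ) * (w j : ℂ)) := by
    have h1 : W * π = V * Dw * star V * (U * Dp * star U) := by rw [← hπd, ← hWd]
    have h2 : Matrix.trace (W * π) = Matrix.trace (Q * Dw * star Q * Dp) := by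
      rw [h1]
      have : V * Dw * star V * (U * Dp * star U)
          = (U * (Q * Dw * star Q * Dp)) * star U := by
        rw [hQdef, StarMul.star_mul, star_star]
        calc V * Dw * star V * (U * Dp * star U)
            = V * Dw * star V * U * Dp * star U := by noncomm_ring
          _ = (U * star U) * V * Dw * (star V * U) * Dp * star U := by
              rw [hUU', one_mul]; noncomm_ring
          _ = U * (star U * V * Dw * (star V * U) * Dp) * star U := by noncomm_ring
      rw [this, Matrix.trace_mul_comm, ← Matrix.mul_assoc, hUU, one_mul]
    rw [h2]
    rw [Matrix.trace]
    refine Finset.sum_congr rfl fun i _ => ?_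
    have h3 : (Q * Dw * star Q * Dp) i i = (Q * Dw * star Q) i i * (p i : ℂ) := by
      rw [mul_diagonal]; rfl
    rw [Matrix.diag_apply, h3, hB i i, Finset.sum_mul]
    refine Finset.sum_congr rfl fun j _ => ?_
    calc Q i j * (w j : ℂ) * star (Q i j) * (p i : ℂ)
        = Q i j * star (Q i j) * ((w j : ℂ) * (p i : ℂ)) := by ring
      _ = (S i j : ℂ) * ((p i : ℂ) * (w j : ℂ)) := by rw [hQS]; ring
  have hre : (Matrix.trace (W * π)).re = ∑ i, ∑ j, S i j * (p i * w j) := by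
    rw [htr]
    have : (∑ i, ∑ j, (S i j : ℂ) * ((p i : ℂ) * (w j : ℂ)))
        = ((∑ i, ∑ j, S i j * (p i * w j) : ℝ) : ℂ) := by
      push_cast; ring
    rw [this, Complex.ofReal_re]
  -- row and column sums of S
  have hrow : ∀ i, ∑ j, S i j = 1 := by
    intro i
    have h1 : (Q * star Q) i i = 1 := by rw [hQQ]; simp
    have h2 : (Q * star Q) i i = ((∑ j, S i j : ℝ) : ℂ) := by
      simp only [mul_apply, Matrix.star_apply]
      push_cast
      exact Finset.sum_congr rfl fun j _ => hQS i j
    rw [h2] at h1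
    exact_mod_cast h1
  have hcol : ∀ j, ∑ i, S i j = 1 := by
    intro j
    have h1 : (star Q * Q) j j = 1 := by rw [hQQ']; simp
    have h2 : (star Q * Q) j j = ((∑ i, S i j : ℝ) : ℂ) := by
      simp only [mul_apply, Matrix.star_apply]
      push_cast
      refine Finset.sum_congr rfl fun i _ => ?_
      rw [mul_comm]; exact hQS i j
    rw [h2] at h1
    exact_mod_cast h1
  have hSnn : ∀ i j, 0 ≤ S i j := fun i j => Complex.normSq_nonneg _
  -- Fenchel-Young inequality termwise
  have hFY : ∀ (i j : Fin d), p i * w j ≤ φ (p i) + ψ (w j) := by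
    intro i j
    have h1 : p i * w j - ψ (w j) ≤ φ (p i) :=
      (hφ (p i) (hπ.eigenvalues_nonneg i)).1 ⟨w j, rfl⟩
    linarith
  -- rewrite heq
  have heq2 : ∑ i, ∑ j, S i j * (p i * w j) = ∑ i, ∑ j, S i j * (φ (p i) + ψ (w j)) := by
    have hr1 : traceFun φ π = ∑ i, φ (p i) := by unfold traceFun; rw [dif_pos hπh]
    have hr2 : traceFun ψ W = ∑ j, ψ (w j) := by unfold traceFun; rw [dif_pos hW]
    have expand : ∑ i, ∑ j, S i j * (φ (p i) + ψ (w j))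
        = (∑ i, φ (p i)) + ∑ j, ψ (w j) := by
      have e1 : ∀ i, ∑ j, S i j * (φ (p i) + ψ (w j))
          = φ (p i) + ∑ j, S i j * ψ (w j) := by
        intro i
        have : ∑ j, S i j * (φ (p i) + ψ (w j))
            = (∑ j, S i j) * φ (p i) + ∑ j, S i j * ψ (w j) := by
          rw [Finset.sum_mul, ← Finset.sum_add_distrib]
          refine Finset.sum_congr rfl fun j _ => by ring
        rw [this, hrow i, one_mul]
      rw [Finset.sum_congr rfl fun i _ => e1 i, Finset.sum_add_distrib]
      congr 1
      rw [Finset.sum_comm]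
      refine Finset.sum_congr rfl fun j _ => ?_
      rw [← Finset.sum_mul, hcol j, one_mul]
    rw [expand, ← hr1, ← hr2, ← heq, hre]
  -- termwise equality
  have hterm : ∀ (i j : Fin d), S i j * (p i * w j) = S i j * (φ (p i) + ψ (w j)) := by
    have hle : ∀ q ∈ (Finset.univ : Finset (Fin d × Fin d)),
        S q.1 q.2 * (p q.1 * w q.2) ≤ S q.1 q.2 * (φ (p q.1) + ψ (w q.2)) :=
      fun q _ => mul_le_mul_of_nonneg_left (hFY q.1 q.2) (hSnn q.1 q.2)
    have hsum : ∑ q : Fin d × Fin d, S q.1 q.2 * (p q.1 * w q.2)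
        = ∑ q : Fin d × Fin d, S q.1 q.2 * (φ (p q.1) + ψ (w q.2)) := by
      rw [Fintype.sum_prod_type, Fintype.sum_prod_type]
      exact heq2
    intro i j
    exact (Finset.sum_eq_sum_iff_of_le hle).mp hsum (i, j) (Finset.mem_univ _)
  -- subgradient property
  have hmax : ∀ (i j : Fin d), Q i j ≠ 0 →
      ∀ t, p i * t - ψ t ≤ p i * w j - ψ (w j) := by
    intro i j hQij t
    have hS0 : S i j ≠ 0 := by
      simpa [hSdef, Complex.normSq_eq_zero] using hQij
    have h1 : p i * w j = φ (p i) + ψ (w j) :=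
      mul_left_cancel₀ hS0 (hterm i j)
    have h2 : p i * t - ψ t ≤ φ (p i) :=
      (hφ (p i) (hπ.eigenvalues_nonneg i)).1 ⟨t, rfl⟩
    linarith
  have hww : ∀ (i j j' : Fin d), Q i j ≠ 0 → Q i j' ≠ 0 → w j = w j' :=
    fun i j j' h1 h2 => subgrad_inj hψ (hmax i j h1) (hmax i j' h2)
  -- the conjugated matrix is diagonal off the diagonal
  have hdiag : ∀ i k, i ≠ k → ∑ j, Q i j * (w j : ℂ) * star (Q k j) = 0 := by
    intro i k hik
    by_cases hex : ∃ j₀, Q i j₀ ≠ 0 ∧ Q k j₀ ≠ 0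
    · obtain ⟨j₀, hj₀i, hj₀k⟩ := hex
      have hconst : ∀ j, Q i j * (w j : ℂ) * star (Q k j)
          = (w j₀ : ℂ) * (Q i j * star (Q k j)) := by
        intro j
        by_cases hj : Q i j = 0
        · simp [hj]
        · by_cases hj' : Q k j = 0
          · simp [hj']
          · rw [hww i j j₀ hj hj₀i]; ring
      rw [Finset.sum_congr rfl fun j _ => hconst j, ← Finset.mul_sum]
      have hQ0 : ∑ j, Q i j * star (Q k j) = 0 := by
        have h1 : (Q * star Q) i k = 0 := by
          rw [hQQ]; simp [Matrix.one_apply, hik]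
        simpa [mul_apply, Matrix.star_apply] using h1
      rw [hQ0, mul_zero]
    · push_neg at hex
      refine Finset.sum_eq_zero fun j _ => ?_
      by_cases hj : Q i j = 0
      · simp [hj]
      · simp [hex j hj]
  -- assemble commutation
  set B : Matrix (Fin d) (Fin d) ℂ := Q * Dw * star Q with hBdef
  have hWU : W = U * B * star U := by
    rw [hWd, hBdef, hQdef, StarMul.star_mul, star_star]
    calc V * Dw * star V
        = (U * star U) * V * Dw * (star V * (U * star U)) := by
          rw [hUU']; noncomm_ring
      _ = U * (star U * V * Dw * (star V * U)) * star U := by noncomm_ring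
  have hDpB : Dp * B = B * Dp := by
    ext i k
    by_cases hik : i = k
    · subst hik
      simp only [hDp, diagonal_mul, mul_diagonal, Function.comp]
      ring
    · have hB0 : B i k = 0 := by rw [hB i k]; exact hdiag i k hik
      simp only [hDp, diagonal_mul, mul_diagonal, Function.comp, hB0, mul_zero, zero_mul]
  have key : ∀ X Y : Matrix (Fin d) (Fin d) ℂ,
      U * X * star U * (U * Y * star U) = U * (X * Y) * star U := by
    intro X Y
    calc U * X * star U * (U * Y * star U)
        = U * (X * ((star U * U) * (Y * star U))) := by noncomm_ring
      _ = U * (X * Y) * star U := by rw [hUU, one_mul]; noncomm_ring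
  show π * W = W * π
  rw [hπd, hWU, key, key, hDpB]
end
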